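/- Let a_0 be the Conolly sequence (a_0(0)=a_0(1)=1, a_0(2)=2, a_0(n)=a_0(n-a_0(n-1))+a_0(n-1-a_0(n-2)) for n>2) and let a_1 be the Tanny-type sequence defined by a_1(n)=1 for 0 ≤ n ≤ 2, a_1(3)=2, and a_1(n) = a_1(n-1-a_1(n-1)) + a_1(n-2-a_1(n-2)) for n > 3. Then for all n ≥ 1, a_1(n) = a_0(n - ⌊log₂ n⌋). -/

import Mathlib

def SS : ℕ → ℕ
  | 0 => 0
  | (n+1) => if (n+1) % 2 = 0 then SS ((n+1)/2) + (n+1) else SS n + 1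
  decreasing_by
  · exact Nat.div_lt_self (Nat.succ_pos n) one_lt_two
  · exact Nat.lt_succ_self n

lemma SS_odd (h : ℕ) : SS (2*h+1) = SS (2*h) + 1 := by
  rw [SS]
  have h2 : (2*h+1) % 2 = 1 := by omega
  simp [h2]

lemma SS_two_mul (h : ℕ) : SS (2*h) = SS h + 2*h := by
  cases h with
  | zero => simp [SS]
  | succ k =>
    have e : 2*(k+1) = (2*k+1)+1 := by ring
    rw [e, SS]
    have h2 : (2*k+1+1) % 2 = 0 := by omega
    have h3 : (2*k+1+1)/2 = k+1 := by omega
    rw [if_pos h2, h3]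

lemma SS_zero : SS 0 = 0 := by rw [SS]
lemma SS_one : SS 1 = 1 := by have := SS_odd 0; simpa [SS_zero] using this
lemma SS_two : SS 2 = 3 := by have := SS_two_mul 1; simpa [SS_one] using this

lemma SS_lt_succ : ∀ n, SS n < SS (n+1) := by
  intro n
  induction n using Nat.strong_induction_on with
  | _ n ih =>
    rcases Nat.even_or_odd (n+1) with he | ho
    · obtain ⟨h, hh⟩ := he
      have hn : n = 2*(h-1)+1 ∨ n = 0 := by omega
      rcases hn with hn | hn
      · -- n+1 = 2h, h ≥ 1
        have hh1 : 1 ≤ h := by omega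
        have e1 : n + 1 = 2*h := by omega
        rw [e1, hn, SS_odd, SS_two_mul, SS_two_mul]
        have : SS (h-1) ≤ SS h := by
          rcases Nat.eq_or_lt_of_le hh1 with h1 | h1
          · rw [← h1]; simp [SS_zero, SS_one]
          · have := ih (h-1) (by omega)
            have e2 : h - 1 + 1 = h := by omega
            rw [e2] at this; omega
        omega
      · subst hn; simp [SS_zero, SS_one]
    · obtain ⟨h, hh⟩ := ho
      have e1 : n = 2*h := by omega
      rw [e1, ← hh, hh, SS_odd]; omega

lemma SS_mono : StrictMono SS := strictMono_nat_of_lt_succ SS_lt_succ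

lemma SS_ge : ∀ n, n ≤ SS n := by
  intro n; induction n with
  | zero => simp [SS_zero]
  | succ k ih => have := SS_lt_succ k; omega

lemma T_mono : ∀ y k, SS y + (y+k) ≤ SS (y+k) + y := by
  intro y k
  induction k with
  | zero => simp
  | succ j ih =>
    have := SS_lt_succ (y+j)
    have e : y + (j+1) = (y+j)+1 := by omega
    rw [e]; omega
lemma SS_pow (k : ℕ) : SS (2^k) + 1 = 2^(k+1) := by
  induction k with
  | zero => simp [SS_one]
  | succ j ih =>
    have e : 2^(j+1) = 2 * 2^j := by ring
    rw [e, SS_two_mul]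
    have : 2^(j+2) = 2*2^(j+1) := by ring
    omega

lemma SS_pow_sub_one (k : ℕ) : SS (2^k - 1) + k + 2 = 2^(k+1) := by
  induction k with
  | zero => simp [SS_zero]
  | succ j ih =>
    have h1 : 1 ≤ 2^j := Nat.one_le_two_pow
    have e : 2^(j+1) - 1 = 2*(2^j - 1) + 1 := by
      have : 2^(j+1) = 2*2^j := by ring
      omega
    rw [e, SS_odd, SS_two_mul]
    have : 2^(j+2) = 2*2^(j+1) := by ring
    have : 2^(j+1) = 2*2^j := by ring
    omega

noncomputable def gg (x : ℕ) : ℕ := Nat.find (⟨x, SS_ge x⟩ : ∃ m, x ≤ SS m)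

lemma gg_spec (x : ℕ) : x ≤ SS (gg x) := Nat.find_spec (⟨x, SS_ge x⟩ : ∃ m, x ≤ SS m)

lemma gg_le {m x : ℕ} (h : x ≤ SS m) : gg x ≤ m := Nat.find_min' _ h

lemma gg_le_self (x : ℕ) : gg x ≤ x := gg_le (SS_ge x)

lemma gg_eq {m x : ℕ} (h1 : SS m < x) (h2 : x ≤ SS (m+1)) : gg x = m + 1 := by
  refine le_antisymm (gg_le h2) ?_
  by_contra hc
  push_neg at hc
  have h3 : gg x ≤ m := by omega
  have := le_trans (gg_spec x) (SS_mono.monotone h3)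
  omega

lemma gg_pos {x : ℕ} (h : 1 ≤ x) : 1 ≤ gg x := by
  by_contra hc
  push_neg at hc
  have h0 : gg x = 0 := by omega
  have := gg_spec x
  rw [h0, SS_zero] at this
  omega

lemma gg_one : gg 1 = 1 := gg_eq (by simp [SS_zero]) (by simp [SS_one])
lemma gg_two : gg 2 = 2 := by
  have := gg_eq (m := 1) (x := 2) (by simp [SS_one]) (by simp [SS_two])
  simpa using this
lemma gg_lb {x : ℕ} (h : 1 ≤ x) : SS (gg x - 1) < x := by
  by_contra hc
  push_neg at hc
  have h1 := gg_le hc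
  have h2 := gg_pos h
  omega

lemma gg_rec : ∀ n, 3 ≤ n → gg n = gg (n - gg (n-1)) + gg (n - 1 - gg (n-2)) := by
  intro n hn
  have hm2 : 2 ≤ gg n := by
    by_contra hc
    push_neg at hc
    have h1 : gg n ≤ 1 := by omega
    have h2 := le_trans (gg_spec n) (SS_mono.monotone h1)
    rw [SS_one] at h2
    omega
  obtain ⟨k, hk | hk⟩ : ∃ k, gg n = 2*k+2 ∨ gg n = 2*k+3 := by
    rcases Nat.even_or_odd (gg n) with ⟨t, ht⟩ | ⟨t, ht⟩
    · exact ⟨t-1, Or.inl (by omega)⟩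
    · exact ⟨t-1, Or.inr (by omega)⟩
  · -- even case : gg n = 2k+2
    have hub := gg_spec n
    have hlb := gg_lb (show 1 ≤ n by omega)
    rw [hk] at hub hlb
    have e0 : 2*k+2-1 = 2*k+1 := by omega
    rw [e0] at hlb
    have e1 : SS (2*k+1) = SS k + 2*k + 1 := by
      rw [SS_odd, SS_two_mul] <;> ring
    have e2 : SS (2*k+2) = SS (k+1) + 2*k + 2 := by
      have h2 : 2*k+2 = 2*(k+1) := by ring
      rw [h2, SS_two_mul] <;> ring
    have er : SS (2*k+1+1) = SS (2*k+2) := by norm_num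
    have er2 : SS (k+1+1) = SS (k+2) := by norm_num
    have eS : SS k < SS (k+1) := SS_lt_succ k
    have eS2 : SS (k+1) < SS (k+2) := SS_lt_succ (k+1)
    have hggSk1 : gg (SS k + 1) = k + 1 := gg_eq (by omega) (by omega)
    rcases Nat.lt_or_ge n (SS k + 2*k + 3) with hc1 | hc1
    · -- case i : n = SS k + 2k + 2
      have hn1 : n = SS k + 2*k + 2 := by omega
      have hk1 : 1 ≤ k := by
        by_contra hc
        push_neg at hc
        have hz : k = 0 := by omega
        subst hz
        rw [SS_zero] at hn1
        omega
      have eSk : SS (k-1) + 1 ≤ SS k := by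
        have h3 := SS_lt_succ (k-1)
        have e : k - 1 + 1 = k := by omega
        rw [e] at h3; omega
      have hg1 : gg (n-1) = 2*k+1 := by
        have := gg_eq (m := 2*k) (x := n-1)
          (by rw [SS_two_mul]; omega) (by omega)
        omega
      have hg2 : gg (n-2) = 2*k := by
        have hs : SS (2*(k-1)+1) = SS (k-1) + 2*(k-1) + 1 := by
          rw [SS_odd, SS_two_mul] <;> ring
        have er3 : SS (2*(k-1)+1+1) = SS (2*k) := by
          have e : 2*(k-1)+1+1 = 2*k := by omega
          rw [e]
        have := gg_eq (m := 2*(k-1)+1) (x := n-2)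
          (by rw [hs]; omega) (by rw [er3, SS_two_mul]; omega)
        omega
      rw [hg1, hg2]
      have a1 : n - (2*k+1) = SS k + 1 := by omega
      have a2 : n - 1 - (2*k) = SS k + 1 := by omega
      rw [a1, a2, hggSk1]
      omega
    · have hg1 : gg (n-1) = 2*k+2 := by
        have := gg_eq (m := 2*k+1) (x := n-1) (by omega) (by omega)
        omega
      rw [hg1]
      rcases Nat.lt_or_ge n (SS k + 2*k + 4) with hc2 | hc2
      · -- case ii : n = SS k + 2k + 3
        have hg2 : gg (n-2) = 2*k+1 := by
          have := gg_eq (m := 2*k) (x := n-2)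
            (by rw [SS_two_mul]; omega) (by omega)
          omega
        rw [hg2]
        have a1 : n - (2*k+2) = SS k + 1 := by omega
        have a2 : n - 1 - (2*k+1) = SS k + 1 := by omega
        rw [a1, a2, hggSk1]
        omega
      · -- case iii : n ≥ SS k + 2k + 4
        have hg2 : gg (n-2) = 2*k+2 := by
          have := gg_eq (m := 2*k+1) (x := n-2) (by omega) (by omega)
          omega
        rw [hg2]
        have b1 : gg (n - (2*k+2)) = k+1 := by
          have := gg_eq (m := k) (x := n - (2*k+2)) (by omega) (by omega)
          omega
        have b2 : gg (n - 1 - (2*k+2)) = k+1 := by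
          have := gg_eq (m := k) (x := n - 1 - (2*k+2)) (by omega) (by omega)
          omega
        rw [b1, b2]
        omega
  · -- odd case : gg n = 2k+3
    have hub := gg_spec n
    have hlb := gg_lb (show 1 ≤ n by omega)
    rw [hk] at hub hlb
    have e0 : 2*k+3-1 = 2*k+2 := by omega
    rw [e0] at hlb
    have e1 : SS (2*k+1) = SS k + 2*k + 1 := by
      rw [SS_odd, SS_two_mul] <;> ring
    have e2 : SS (2*k+2) = SS (k+1) + 2*k + 2 := by
      have h2 : 2*k+2 = 2*(k+1) := by ring
      rw [h2, SS_two_mul] <;> ring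
    have e3 : SS (2*k+3) = SS (2*k+2) + 1 := by
      have h1 : 2*k+3 = 2*(k+1)+1 := by ring
      have h2 : 2*(k+1) = 2*k+2 := by ring
      rw [h1, SS_odd, h2]
    have er : SS (2*k+1+1) = SS (2*k+2) := by norm_num
    have er2 : SS (k+1+1) = SS (k+2) := by norm_num
    have eS : SS k < SS (k+1) := SS_lt_succ k
    have eS2 : SS (k+1) < SS (k+2) := SS_lt_succ (k+1)
    have hn1 : n = SS (k+1) + 2*k + 3 := by omega
    have hg1 : gg (n-1) = 2*k+2 := by
      have := gg_eq (m := 2*k+1) (x := n-1) (by omega) (by omega)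
      omega
    have hg2 : gg (n-2) = 2*k+2 := by
      have := gg_eq (m := 2*k+1) (x := n-2) (by omega) (by omega)
      omega
    rw [hg1, hg2]
    have a1 : n - (2*k+2) = SS (k+1) + 1 := by omega
    have a2 : n - 1 - (2*k+2) = SS (k+1) := by omega
    rw [a1, a2]
    have b1 : gg (SS (k+1) + 1) = k+2 := by
      have := gg_eq (m := k+1) (x := SS (k+1) + 1) (by omega) (by omega)
      omega
    have b2 : gg (SS (k+1)) = k+1 := by
      have := gg_eq (m := k) (x := SS (k+1)) (by omega) (by omega)
      omega
    rw [b1, b2]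
    omega
section
variable (a0 : ℕ → ℕ)

lemma a0_eq_gg (h01 : a0 1 = 1) (h02 : a0 2 = 2)
    (h0rec : ∀ n, 2 < n → a0 n = a0 (n - a0 (n - 1)) + a0 (n - 1 - a0 (n - 2))) :
    ∀ n, 1 ≤ n → a0 n = gg n := by
  intro n
  induction n using Nat.strong_induction_on with
  | _ n ih =>
    intro hn
    rcases Nat.lt_or_ge n 3 with h3 | h3
    · interval_cases n
      · rw [h01, gg_one]
      · rw [h02, gg_two]
    · have e1 : a0 (n-1) = gg (n-1) := ih (n-1) (by omega) (by omega)
      have e2 : a0 (n-2) = gg (n-2) := ih (n-2) (by omega) (by omega)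
      have hb1 : 1 ≤ gg (n-1) := gg_pos (by omega)
      have hb2 : gg (n-1) ≤ n - 1 := gg_le_self _
      have hb3 : gg (n-2) ≤ n - 2 := gg_le_self _
      rw [h0rec n (by omega), e1, e2,
        ih (n - gg (n-1)) (by omega) (by omega),
        ih (n - 1 - gg (n-2)) (by omega) (by omega)]
      exact (gg_rec n h3).symm

end

-- key bound lemma
lemma gg_bound {L x : ℕ} (hL : 2 ≤ L) (h1 : 2^L ≤ x + L) (h2 : x + L + 2 ≤ 2^(L+1)) :
    2^(L-1) + gg x ≤ x + L ∧ x + L + 1 ≤ 2^L + gg x := by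
  have hp : 2^L = 2*2^(L-1) := by
    rw [← pow_succ']
    congr 1
    omega
  have hp2 : 2^(L+1) = 2*2^L := by rw [← pow_succ']
  have hple : 1 ≤ 2^(L-1) := Nat.one_le_two_pow
  have hLL : (L-1)+1 = L := by omega
  constructor
  · -- upper bound : gg x ≤ x + L - 2^(L-1)
    have hm : 2^(L-1) ≤ x + L - 2^(L-1) := by omega
    -- SS m ≥ m + 2^(L-1) - 1 via T monotone from 2^(L-1)
    have ht := T_mono (2^(L-1)) (x + L - 2^(L-1) - 2^(L-1))
    have he : 2^(L-1) + (x + L - 2^(L-1) - 2^(L-1)) = x + L - 2^(L-1) := by omega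
    rw [he] at ht
    have hS := SS_pow (L-1)
    rw [hLL] at hS
    have hx : x ≤ SS (x + L - 2^(L-1)) := by omega
    have := gg_le hx
    omega
  · -- lower bound
    have hLp : L < 2^L := (Nat.lt_two_pow_self (n := L))
    rcases Nat.lt_or_ge (x + L) (2^L + 1) with hc | hc
    · have := gg_pos (show 1 ≤ x by omega)
      omega
    · have hy1 : 1 ≤ x + L - 2^L := by omega
      have hy2 : x + L - 2^L ≤ 2^L - 2 := by omega
      -- SS y ≤ y + 2^L - L - 1
      have ht := T_mono (x + L - 2^L) (2^L - 2 - (x + L - 2^L))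
      have he : (x + L - 2^L) + (2^L - 2 - (x + L - 2^L)) = 2^L - 2 := by omega
      rw [he] at ht
      have hSe := SS_two_mul (2^(L-1) - 1)
      have e : 2*(2^(L-1) - 1) = 2^L - 2 := by omega
      rw [e] at hSe
      have hS1 := SS_pow_sub_one (L-1)
      rw [hLL] at hS1
      have hlt : SS (x + L - 2^L) < x := by omega
      by_contra hcon
      push_neg at hcon
      have hle : gg x ≤ x + L - 2^L := by omega
      have := le_trans (gg_spec x) (SS_mono.monotone hle)
      omega
lemma log2_eq {a t : ℕ} (h1 : 2^a ≤ t) (h2 : t < 2*2^a) : Nat.log 2 t = a := by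
  apply Nat.log_eq_of_pow_le_of_lt_pow h1
  rw [pow_succ]
  omega

lemma gA : ∀ L, 1 ≤ L → gg (2^L - L) = 2^(L-1) := by
  intro L hL
  have hS1 := SS_pow_sub_one (L-1)
  have hS2 := SS_pow (L-1)
  have hLL : (L-1)+1 = L := by omega
  rw [hLL] at hS1 hS2
  have hLp : L - 1 < 2^(L-1) := Nat.lt_two_pow_self
  have e : 2^(L-1)-1+1 = 2^(L-1) := by omega
  have := gg_eq (m := 2^(L-1)-1) (x := 2^L - L) (by omega) (by rw [e]; omega)
  omega

lemma gB : ∀ L, 2 ≤ L → gg (2^L - L - 1) = 2^(L-1) - 1 := by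
  intro L hL
  have hS1 := SS_pow_sub_one (L-1)
  have hS0 := SS_pow_sub_one (L-2)
  have hLL : (L-1)+1 = L := by omega
  have hLL2 : (L-2)+1 = L-1 := by omega
  rw [hLL] at hS1
  rw [hLL2] at hS0
  have hp1 : 2^(L-1) = 2*2^(L-2) := by
    rw [← pow_succ', hLL2]
  have hp : 2^L = 2*2^(L-1) := by
    rw [← pow_succ', hLL]
  have hq : 1 ≤ 2^(L-2) := Nat.one_le_two_pow
  have hLp : L - 1 < 2^(L-1) := Nat.lt_two_pow_self
  -- SS (2^(L-1) - 2)
  have hSe := SS_two_mul (2^(L-2) - 1)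
  have e2 : 2*(2^(L-2) - 1) = 2^(L-1) - 2 := by omega
  rw [e2] at hSe
  have e3 : 2^(L-1)-2+1 = 2^(L-1)-1 := by omega
  have := gg_eq (m := 2^(L-1)-2) (x := 2^L - L - 1)
    (by omega) (by rw [e3]; omega)
  omega

lemma gC : ∀ L, 2 ≤ L → gg (2^L + 1 - L) = 2^(L-1) := by
  intro L hL
  have hS1 := SS_pow_sub_one (L-1)
  have hS2 := SS_pow (L-1)
  have hLL : (L-1)+1 = L := by omega
  rw [hLL] at hS1 hS2
  have hLp : L - 1 < 2^(L-1) := Nat.lt_two_pow_self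
  have hLp2 : L < 2^L := Nat.lt_two_pow_self
  have e : 2^(L-1)-1+1 = 2^(L-1) := by omega
  have := gg_eq (m := 2^(L-1)-1) (x := 2^L + 1 - L) (by omega) (by rw [e]; omega)
  omega

noncomputable def hh (n : ℕ) : ℕ := gg (n - Nat.log 2 n)
lemma hh_rec : ∀ n, 4 ≤ n → hh n = hh (n - 1 - hh (n-1)) + hh (n - 2 - hh (n-2)) := by
  intro n hn
  obtain ⟨L, hLdef⟩ : ∃ L, Nat.log 2 n = L := ⟨_, rfl⟩
  have hL : 2 ≤ L := by
    rw [← hLdef]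
    exact (Nat.le_log_iff_pow_le (by norm_num) (by omega)).2 (by norm_num; omega)
  have hn1 : 2^L ≤ n := by
    rw [← hLdef]; exact Nat.pow_log_le_self 2 (by omega)
  have hn2 : n < 2*2^L := by
    have h := Nat.lt_pow_succ_log_self (b := 2) (by norm_num) n
    rw [hLdef, pow_succ] at h
    omega
  have hLL : (L-1)+1 = L := by omega
  have hLL2 : (L-2)+1 = L-1 := by omega
  have hp : 2^L = 2*2^(L-1) := by rw [← pow_succ', hLL]
  have hp1 : 2^(L-1) = 2*2^(L-2) := by rw [← pow_succ', hLL2]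
  have hq : 1 ≤ 2^(L-2) := Nat.one_le_two_pow
  have hLp : L < 2^L := Nat.lt_two_pow_self
  have hLp1 : L - 1 < 2^(L-1) := Nat.lt_two_pow_self
  simp only [hh]
  rw [hLdef]
  have eL : (2:ℕ)^(L-1-1) = 2^(L-2) := by
    rw [show L-1-1 = L-2 by omega]
  rcases Nat.lt_or_ge n (2^L+2) with hlt | hge
  · -- n = 2^L or 2^L + 1
    have lgA : Nat.log 2 (2^L - 1) = L-1 := log2_eq (by omega) (by omega)
    have lgC : Nat.log 2 (2^(L-1) - 1) = L-2 := log2_eq (by omega) (by omega)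
    have e1 : 2^L - 1 - (L-1) = 2^L - L := by omega
    have e3 : 2^L - 1 - 2^(L-1) = 2^(L-1) - 1 := by omega
    have e5 : 2^(L-1) - 1 - (L-2) = 2^(L-1) - (L-1) := by omega
    rcases (by omega : n = 2^L ∨ n = 2^L + 1) with h | h
    · rw [h]
      have lgB : Nat.log 2 (2^L - 2) = L-1 := log2_eq (by omega) (by omega)
      have e2 : 2^L - 2 - (L-1) = 2^L - L - 1 := by omega
      have e4 : 2^L - 2 - (2^(L-1) - 1) = 2^(L-1) - 1 := by omega
      rw [lgA, lgB, e1, e2, gA L (by omega), gB L hL, e3, e4, lgC, e5,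
        gA (L-1) (by omega), eL]
      omega
    · rw [h]
      have f1 : 2^L + 1 - 1 = 2^L := by omega
      have f2 : 2^L + 1 - 2 = 2^L - 1 := by omega
      have lgP : Nat.log 2 (2^L) = L := Nat.log_pow (by norm_num) L
      have lgP1 : Nat.log 2 (2^(L-1)) = L-1 := Nat.log_pow (by norm_num) (L-1)
      have e6 : 2^L - 2^(L-1) = 2^(L-1) := by omega
      rw [f1, f2, lgP, lgA, e1, gA L (by omega), e6, e3, lgP1, lgC, e5,
        gA (L-1) (by omega), eL, gC L hL]
      omega
  · -- generic case
    have lg1 : Nat.log 2 (n-1) = L := log2_eq (by omega) (by omega)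
    have lg2 : Nat.log 2 (n-2) = L := log2_eq (by omega) (by omega)
    rw [lg1, lg2]
    have en1 : n - 1 - L = n - L - 1 := by omega
    have en2 : n - 2 - L = n - L - 2 := by omega
    rw [en1, en2]
    have hb1 := gg_bound (L := L) (x := n - L - 1) hL (by omega)
      (by rw [pow_succ]; omega)
    have hb2 := gg_bound (L := L) (x := n - L - 2) hL (by omega)
      (by rw [pow_succ]; omega)
    have lga1 : Nat.log 2 (n - 1 - gg (n - L - 1)) = L - 1 :=
      log2_eq (by omega) (by omega)
    have lga2 : Nat.log 2 (n - 2 - gg (n - L - 2)) = L - 1 :=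
      log2_eq (by omega) (by omega)
    rw [lga1, lga2]
    have ea1 : n - 1 - gg (n - L - 1) - (L-1) = n - L - gg (n - L - 1) := by omega
    have ea2 : n - 2 - gg (n - L - 2) - (L-1) = n - L - 1 - gg (n - L - 2) := by omega
    rw [ea1, ea2]
    exact gg_rec (n - L) (by omega)
lemma a1_eq_hh (a1 : ℕ → ℕ)
    (h1init : ∀ n ≤ 2, a1 n = 1) (h13 : a1 3 = 2)
    (h1rec : ∀ n, 3 < n →
      a1 n = a1 (n - 1 - a1 (n - 1)) + a1 (n - 2 - a1 (n - 2))) :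
    ∀ n, 1 ≤ n → a1 n = hh n := by
  intro n
  induction n using Nat.strong_induction_on with
  | _ n ih =>
    intro hn
    rcases Nat.lt_or_ge n 4 with h4 | h4
    · interval_cases n
      · rw [h1init 1 (by omega)]
        simp only [hh, Nat.log_one_right]
        rw [gg_one]
      · rw [h1init 2 (by omega)]
        simp only [hh]
        rw [show Nat.log 2 2 = 1 from log2_eq (by norm_num) (by norm_num)]
        rw [show 2 - 1 = 1 from rfl, gg_one]
      · rw [h13]
        simp only [hh]
        rw [show Nat.log 2 3 = 1 from log2_eq (by norm_num) (by norm_num)]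
        rw [show 3 - 1 = 2 from rfl, gg_two]
    · have ih1 : a1 (n-1) = hh (n-1) := ih (n-1) (by omega) (by omega)
      have ih2 : a1 (n-2) = hh (n-2) := ih (n-2) (by omega) (by omega)
      have hb1 : hh (n-1) + 2 ≤ n := by
        have h1 := gg_le_self (n - 1 - Nat.log 2 (n-1))
        have h2 : 1 ≤ Nat.log 2 (n-1) :=
          (Nat.le_log_iff_pow_le (by norm_num) (by omega)).2 (by norm_num; omega)
        simp only [hh]
        omega
      have hb2 : hh (n-2) + 3 ≤ n := by
        have h1 := gg_le_self (n - 2 - Nat.log 2 (n-2))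
        have h2 : 1 ≤ Nat.log 2 (n-2) :=
          (Nat.le_log_iff_pow_le (by norm_num) (by omega)).2 (by norm_num; omega)
        simp only [hh]
        omega
      rw [h1rec n (by omega), ih1, ih2,
        ih (n - 1 - hh (n-1)) (by omega) (by omega),
        ih (n - 2 - hh (n-2)) (by omega) (by omega)]
      exact (hh_rec n h4).symm


/-- If a₀ is the Conolly (s = 0) meta-Fibonacci sequence and a₁ is the Tanny-type
    (s = 1) sequence, then a₁(n) = a₀(n - ⌊log₂ n⌋) for all n ≥ 1. -/
theorem tanny_eq_conolly_shift (a0 a1 : ℕ → ℕ)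
    (h00 : a0 0 = 1) (h01 : a0 1 = 1) (h02 : a0 2 = 2)
    (h0rec : ∀ n, 2 < n → a0 n = a0 (n - a0 (n - 1)) + a0 (n - 1 - a0 (n - 2)))
    (h1init : ∀ n ≤ 2, a1 n = 1) (h13 : a1 3 = 2)
    (h1rec : ∀ n, 3 < n →
      a1 n = a1 (n - 1 - a1 (n - 1)) + a1 (n - 2 - a1 (n - 2))) :
    ∀ n, 1 ≤ n → a1 n = a0 (n - Nat.log 2 n) := by
  intro n hn
  have hlog : Nat.log 2 n < n := Nat.log_lt_self 2 (by omega)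
  rw [a1_eq_hh a1 h1init h13 h1rec n hn]
  simp only [hh]
  rw [a0_eq_gg a0 h01 h02 h0rec (n - Nat.log 2 n) (by omega)]
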